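/- Let J₁, J₂ ∈ ℂ and for k ∈ ℝ let H_k be the 2×2 Hermitian matrix with zero diagonal and off-diagonal entries J₁ + J₂e^{−ik} (upper right) and its complex conjugate (lower left). Set W := |J₁| + |J₂| and δ := ||J₁| − |J₂||. Then the union over k ∈ ℝ of the spectra of the matrices H_k equals [−W, −δ] ∪ [δ, W] (viewed as a subset of ℝ, all eigenvalues being real): ⋃_{k∈ℝ} σ(H_k) = [−W, −δ] ∪ [δ, W]. -/

import Mathlib

open scoped ComplexConjugate Matrix

noncomputable section

lemma spec_off (a : ℂ) : spectrum ℂ (!![(0:ℂ), a; conj a, 0]) =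
    {((‖a‖ : ℝ) : ℂ), -((‖a‖ : ℝ) : ℂ)} := by
  ext z
  rw [spectrum.mem_iff]
  have h1 : algebraMap ℂ (Matrix (Fin 2) (Fin 2) ℂ) z - !![(0:ℂ), a; conj a, 0]
      = !![z, -a; -conj a, z] := by
    ext i j
    fin_cases i <;> fin_cases j <;>
      simp [Matrix.algebraMap_matrix_apply]
  have hc : a * conj a = ((‖a‖ : ℝ) : ℂ)^2 := by
    rw [Complex.mul_conj, Complex.normSq_eq_norm_sq]; push_cast; ring
  rw [h1, Matrix.isUnit_iff_isUnit_det, Matrix.det_fin_two_of, isUnit_iff_ne_zero, not_not]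
  have h2 : z * z - -a * -conj a = (z - ((‖a‖ : ℝ) : ℂ)) * (z + ((‖a‖ : ℝ) : ℂ)) := by
    linear_combination -hc
  rw [h2, mul_eq_zero, sub_eq_zero, add_eq_zero_iff_eq_neg]
  simp [Set.mem_insert_iff]

lemma abs_exp_ik (k : ℝ) : ‖Complex.exp (-(Complex.I * k))‖ = 1 := by
  rw [Complex.norm_exp]
  simp

lemma normSq_val (J₁ J₂ : ℂ) (k : ℝ) :
    Complex.normSq (J₁ + J₂ * Complex.exp (-(Complex.I * k)))
      = ‖J₁‖ ^ 2 + ‖J₂‖ ^ 2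
        + 2 * (J₁ * conj J₂ * Complex.exp (Complex.I * k)).re := by
  rw [Complex.normSq_add]
  have h1 : Complex.normSq (J₂ * Complex.exp (-(Complex.I * k))) = ‖J₂‖ ^ 2 := by
    rw [← Complex.sq_norm, norm_mul, abs_exp_ik, mul_one]
  have h2 : conj (J₂ * Complex.exp (-(Complex.I * k))) = conj J₂ * Complex.exp (Complex.I * k) := by
    rw [map_mul, ← Complex.exp_conj]
    simp [Complex.conj_I]
  rw [h1, h2, ← Complex.sq_norm J₁]
  ring_nf

lemma range_abs (J₁ J₂ : ℂ) :
    Set.range (fun k : ℝ => ‖J₁ + J₂ * Complex.exp (-(Complex.I * k))‖) =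
    Set.Icc |‖J₁‖ - ‖J₂‖| (‖J₁‖ + ‖J₂‖) := by
  set r₁ := ‖J₁‖ with hr₁
  set r₂ := ‖J₂‖ with hr₂
  apply Set.eq_of_subset_of_subset
  · rintro _ ⟨k, rfl⟩
    have he : ‖J₂ * Complex.exp (-(Complex.I * k))‖ = r₂ := by
      rw [norm_mul, abs_exp_ik, mul_one]
    constructor
    · calc |r₁ - r₂| = |‖J₁‖ - ‖J₂ * Complex.exp (-(Complex.I * k))‖| := by
            rw [he]
        _ ≤ ‖J₁ - -(J₂ * Complex.exp (-(Complex.I * k)))‖ := by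
            rw [← norm_neg (J₂ * _)]
            exact abs_norm_sub_norm_le _ _
        _ = ‖J₁ + J₂ * Complex.exp (-(Complex.I * k))‖ := by rw [sub_neg_eq_add]
    · calc ‖J₁ + J₂ * Complex.exp (-(Complex.I * k))‖
          ≤ ‖J₁‖ + ‖J₂ * Complex.exp (-(Complex.I * k))‖ :=
            norm_add_le _ _
        _ = r₁ + r₂ := by rw [he]
  · rintro v ⟨hv1, hv2⟩
    have hv0 : 0 ≤ v := le_trans (abs_nonneg _) hv1
    have hvsq1 : (r₁ - r₂)^2 ≤ v^2 := by
      rw [← sq_abs (r₁ - r₂)]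
      exact pow_le_pow_left₀ (abs_nonneg _) hv1 2
    have hvsq2 : v^2 ≤ (r₁ + r₂)^2 := by
      have h0 : (0:ℝ) ≤ r₁ + r₂ := by positivity
      exact pow_le_pow_left₀ hv0 hv2 2
    rcases eq_or_lt_of_le (show (0:ℝ) ≤ r₁ * r₂ by positivity) with h0 | h0
    · -- r₁ * r₂ = 0 : degenerate, v is forced
      have hveq : v^2 = r₁^2 + r₂^2 := by nlinarith
      refine ⟨0, ?_⟩
      simp only
      rcases mul_eq_zero.mp h0.symm with h | h
      · have hJ : J₁ = 0 := by rwa [hr₁, norm_eq_zero] at h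
        have : ‖J₁ + J₂ * Complex.exp (-(Complex.I * (0:ℝ)))‖ = r₂ := by
          simp [hJ, hr₂]
        rw [this]; nlinarith
      · have hJ : J₂ = 0 := by rwa [hr₂, norm_eq_zero] at h
        have : ‖J₁ + J₂ * Complex.exp (-(Complex.I * (0:ℝ)))‖ = r₁ := by
          simp [hJ, hr₁]
        rw [this]; nlinarith
    · set c : ℝ := (v^2 - r₁^2 - r₂^2) / (2 * (r₁ * r₂)) with hc
      have hc1 : -1 ≤ c := by
        rw [hc, le_div_iff₀ (by positivity)]
        nlinarith
      have hc2 : c ≤ 1 := by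
        rw [hc, div_le_iff₀ (by positivity)]
        nlinarith
      set w : ℂ := J₁ * conj J₂ with hw
      have habsw : ‖w‖ = r₁ * r₂ := by
        rw [hw, norm_mul, Complex.norm_conj]
      set t : ℝ := Real.arccos c with ht
      refine ⟨t - Complex.arg w, ?_⟩
      simp only
      have hk : w * Complex.exp (Complex.I * (t - Complex.arg w))
          = (‖w‖ : ℂ) * Complex.exp ((t:ℂ) * Complex.I) := by
        nth_rewrite 1 [← Complex.norm_mul_exp_arg_mul_I w]
        rw [mul_assoc, ← Complex.exp_add]
        congr 1
        push_cast
        ring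
      have hre : (w * Complex.exp (Complex.I * ((t : ℝ) - Complex.arg w : ℝ))).re
          = (v^2 - r₁^2 - r₂^2) / 2 := by
        push_cast
        rw [hk]
        have : ((‖w‖ : ℂ) * Complex.exp ((t:ℂ) * Complex.I)).re
            = ‖w‖ * Real.cos t := by
          simp [Complex.exp_mul_I, ← Complex.ofReal_cos]
        rw [this, habsw, ht, Real.cos_arccos hc1 hc2, hc]
        have h1' : r₁ ≠ 0 := left_ne_zero_of_mul h0.ne'
        have h2' : r₂ ≠ 0 := right_ne_zero_of_mul h0.ne'
        field_simp
      have hnsq : Complex.normSq (J₁ + J₂ * Complex.exp (-(Complex.I * ((t : ℝ) - Complex.arg w : ℝ))))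
          = v^2 := by
        rw [normSq_val, ← hr₁, ← hr₂, ← hw, hre]
        ring
      rw [Complex.norm_def, hnsq, Real.sqrt_sq hv0]

/-- the bulk spectrum of the SSH chain. The union over k ∈ ℝ of the
spectra of the Bloch fibers H_k = [[0, J₁ + J₂e^{−ik}], [conj(J₁+J₂e^{−ik}), 0]]
equals [−W, −δ] ∪ [δ, W] with W = |J₁| + |J₂| and δ = ||J₁| − |J₂||, viewed inside ℂ. -/

theorem statement7 (J₁ J₂ : ℂ) :
    (⋃ k : ℝ, spectrum ℂ
        (!![(0 : ℂ), J₁ + J₂ * Complex.exp (-(Complex.I * k));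
            conj J₁ + conj J₂ * Complex.exp (Complex.I * k), 0])) =
      (fun x : ℝ => (x : ℂ)) ''
        (Set.Icc (-(‖J₁‖ + ‖J₂‖)) (-|‖J₁‖ - ‖J₂‖|) ∪
          Set.Icc |‖J₁‖ - ‖J₂‖| (‖J₁‖ + ‖J₂‖)) := by
  have hconj : ∀ k : ℝ, conj J₁ + conj J₂ * Complex.exp (Complex.I * k)
      = conj (J₁ + J₂ * Complex.exp (-(Complex.I * k))) := by
    intro k
    rw [map_add, map_mul, ← Complex.exp_conj]
    simp [Complex.conj_I]
  set g : ℝ → ℝ := fun k => ‖J₁ + J₂ * Complex.exp (-(Complex.I * k))‖ with hg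
  have hrange := range_abs J₁ J₂
  ext z
  simp only [Set.mem_iUnion, Set.mem_image, Set.mem_union, Set.mem_Icc]
  constructor
  · rintro ⟨k, hk⟩
    rw [hconj k, spec_off] at hk
    have hmem : g k ∈ Set.Icc |‖J₁‖ - ‖J₂‖|
        (‖J₁‖ + ‖J₂‖) := by
      rw [← hrange]; exact ⟨k, rfl⟩
    obtain ⟨h1, h2⟩ := hmem
    rcases hk with rfl | hk
    · exact ⟨g k, Or.inr ⟨h1, h2⟩, rfl⟩
    · rw [Set.mem_singleton_iff] at hk
      refine ⟨-(g k), Or.inl ⟨by linarith, by linarith⟩, ?_⟩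
      rw [hk]; push_cast; ring
  · rintro ⟨x, hx | hx, rfl⟩
    · obtain ⟨h1, h2⟩ := hx
      have : -x ∈ Set.range g := by
        rw [hrange]; exact ⟨by linarith, by linarith⟩
      obtain ⟨k, hk⟩ := this
      refine ⟨k, ?_⟩
      rw [hconj k, spec_off]
      right
      rw [Set.mem_singleton_iff]
      have hk' : ‖J₁ + J₂ * Complex.exp (-(Complex.I * (k:ℝ)))‖ = -x := hk
      rw [hk']; push_cast; ring
    · have : x ∈ Set.range g := by rw [hrange]; exact hx
      obtain ⟨k, hk⟩ := this
      refine ⟨k, ?_⟩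
      rw [hconj k, spec_off]
      left
      have hk' : ‖J₁ + J₂ * Complex.exp (-(Complex.I * (k:ℝ)))‖ = x := hk
      rw [hk']
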